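/- Let (N,x) be the apex game with apex player a, |N| ≥ 3, let S ⊆ N with |S| ≥ 2, and let p_S, q_S be probability distributions over Π₂(S) and over the subsets of N\S. Then the decisiveness index takes the values: D^x_{p,q}(S) = q_S(N\(S∪{a})) + q_S({a}) if a ∉ S; D^x_{p,q}(S) = (q_S(∅) + q_S(N\S))·p_S({{a}, S\{a}}) if a ∈ S and S ≠ N; and D^x_{p,q}(N) = 0. -/

import Mathlib

open Finset

variable {α : Type*} [DecidableEq α]

/-- A simple monotone game on the player set `N`: `v` maps coalitions to `{0,1}`,
`v ∅ = 0`, `v N = 1`, and `v` is monotone on subsets of `N`. -/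
structure SimpleGame (N : Finset α) (v : Finset α → ℝ) : Prop where
  empty : v ∅ = 0
  full : v N = 1
  mono : ∀ ⦃S T : Finset α⦄, S ⊆ T → T ⊆ N → v S ≤ v T
  binary : ∀ S ⊆ N, v S = 0 ∨ v S = 1

/-- Block interaction indicator `BI v {S₁,S₂} T = v(S₁∪S₂∪T) − v(S₁∪T) − v(S₂∪T) + v(T)`. -/
noncomputable def BI (v : Finset α → ℝ) (π : Sym2 (Finset α)) (T : Finset α) : ℝ :=
  Sym2.lift ⟨fun A B => v (A ∪ B ∪ T) - v (A ∪ T) - v (B ∪ T) + v T,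
    fun A B => by simp only []; rw [Finset.union_comm A B]; ring⟩ π

/-- `Π₂(S)`: the set of unordered partitions of `S` into two nonempty parts. -/
def Pi2 (S : Finset α) : Finset (Sym2 (Finset α)) :=
  (S.powerset.filter fun Q => Q ≠ ∅ ∧ Q ≠ S).image fun Q => s(Q, S \ Q)

/-- `S` is critical with respect to `T`: `v(S∪T) − v(T) = 1`. -/
def Critical (v : Finset α → ℝ) (S T : Finset α) : Prop := v (S ∪ T) - v T = 1

/-- `S` is essential critical with respect to `T`: `S` is critical wrt `T` and no
proper nonempty subset of `S` is critical wrt `T`. -/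
def EssentialCritical (v : Finset α → ℝ) (S T : Finset α) : Prop :=
  Critical v S T ∧ ∀ S' : Finset α, S' ⊂ S → S'.Nonempty → ¬ Critical v S' T

/-- The attitude `A_p(S,T)` of `S` towards `T` under the distribution `p` on `Π₂(S)`. -/
noncomputable def attitude (v : Finset α → ℝ) (p : Sym2 (Finset α) → ℝ)
    (S T : Finset α) : ℝ :=
  ∑ π ∈ Pi2 S, p π * BI v π T

/-- The coopetition index `C_{p,q}(S)`. -/
noncomputable def coop (N : Finset α) (v : Finset α → ℝ)
    (p : Sym2 (Finset α) → ℝ) (q : Finset α → ℝ) (S : Finset α) : ℝ :=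
  ∑ T ∈ (N \ S).powerset, q T * attitude v p S T

/-- `Σ_S(N)`: orderings of `N` (as lists) in which the elements of `S` occupy
consecutive positions. -/
noncomputable def SigmaOrd (N S : Finset α) : Finset (List α) := by
  classical
  exact N.toList.permutations.toFinset.filter
    fun l => ∃ k ∈ Finset.range (l.length + 1), ((l.drop k).take S.card).toFinset = S

/-- Sequential attitude `AS(S,σ)` of `S` towards the ordering `l`:
the average over `k = 1, …, s−1` of the block interaction between the first `k` and the
last `s−k` elements of the block of `S` in `l`, against the predecessors of `S` in `l`. -/
noncomputable def seqAttitude (v : Finset α → ℝ) (S : Finset α) (l : List α) : ℝ :=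
  (1 / ((S.card : ℝ) - 1)) * ∑ k ∈ Finset.Icc 1 (S.card - 1),
    BI v (s((((l.dropWhile fun x => decide (x ∉ S)).take S.card).take k).toFinset,
            (((l.dropWhile fun x => decide (x ∉ S)).take S.card).drop k).toFinset))
      (l.takeWhile fun x => decide (x ∉ S)).toFinset

/-- Shapley-Owen coopetition index defined through orderings. -/
noncomputable def C_SO_ord (N : Finset α) (v : Finset α → ℝ) (S : Finset α) : ℝ :=
  (1 / ((SigmaOrd N S).card : ℝ)) * ∑ l ∈ SigmaOrd N S, seqAttitude v S l

/-- Shapley-Owen weight on partitions `{Q, S\Q}`: `2·q!·(s−q)!/((s−1)·s!)`. -/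
noncomputable def soWeight (S : Finset α) : Sym2 (Finset α) → ℝ :=
  Sym2.lift ⟨fun A B => (2 * A.card.factorial * B.card.factorial : ℝ) /
      (((S.card : ℝ) - 1) * (S.card.factorial : ℝ)),
    fun A B => by simp only []; ring⟩

/-- Shapley-Owen weight on external coalitions: `t!·(n−s−t)!/(n−s+1)!`. -/
noncomputable def soExt (N S T : Finset α) : ℝ :=
  (T.card.factorial * (N.card - S.card - T.card).factorial : ℝ) /
    ((N.card - S.card + 1).factorial : ℝ)

/-- Shapley-Owen coopetition index (closed formula). -/
noncomputable def C_SO (N : Finset α) (v : Finset α → ℝ) (S : Finset α) : ℝ :=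
  ∑ T ∈ (N \ S).powerset, soExt N S T * ∑ π ∈ Pi2 S, soWeight S π * BI v π T

/-- Banzhaf coopetition index. -/
noncomputable def C_Bz (N : Finset α) (v : Finset α → ℝ) (S : Finset α) : ℝ :=
  (1 / ((2 : ℝ) ^ (N.card - S.card) * ((2 : ℝ) ^ (S.card - 1) - 1))) *
    ∑ T ∈ (N \ S).powerset, ∑ π ∈ Pi2 S, BI v π T

/-- Decisiveness index `D_{p,q}(S)`. -/
noncomputable def decis (N : Finset α) (v : Finset α → ℝ)
    (p : Sym2 (Finset α) → ℝ) (q : Finset α → ℝ) (S : Finset α) : ℝ :=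
  ∑ T ∈ (N \ S).powerset, q T * ∑ π ∈ Pi2 S, p π * |BI v π T|

/-- Banzhaf decisiveness index. -/
noncomputable def D_Bz (N : Finset α) (v : Finset α → ℝ) (S : Finset α) : ℝ :=
  (1 / ((2 : ℝ) ^ (N.card - S.card) * ((2 : ℝ) ^ (S.card - 1) - 1))) *
    ∑ T ∈ (N \ S).powerset, ∑ π ∈ Pi2 S, |BI v π T|

/-- Shapley-Owen decisiveness index. -/
noncomputable def D_SO (N : Finset α) (v : Finset α → ℝ) (S : Finset α) : ℝ :=
  ∑ T ∈ (N \ S).powerset, soExt N S T * ∑ π ∈ Pi2 S, soWeight S π * |BI v π T|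

/-- The apex game on `N` with apex player `a`. -/
noncomputable def apexGame (N : Finset α) (a : α) : Finset α → ℝ :=
  fun S => if (a ∈ S ∧ (S \ {a}).Nonempty) ∨ S = N \ {a} then 1 else 0

lemma apex_pos (N : Finset α) (a : α) {X : Finset α} (h1 : a ∈ X)
    (h2 : (X \ {a}).Nonempty) : apexGame N a X = 1 := if_pos (Or.inl ⟨h1, h2⟩)

lemma apex_full (N : Finset α) (a : α) : apexGame N a (N \ {a}) = 1 := if_pos (Or.inr rfl)

lemma apex_singleton (N : Finset α) (a : α) : apexGame N a {a} = 0 := by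
  rw [apexGame, if_neg]
  push_neg
  refine ⟨fun _ => ?_, fun h => ?_⟩
  · simp
  · have : a ∈ N \ {a} := h ▸ mem_singleton_self a
    simp at this

lemma apex_not_mem (N : Finset α) (a : α) {X : Finset α} (h1 : a ∉ X)
    (h2 : X ≠ N \ {a}) : apexGame N a X = 0 := by
  rw [apexGame, if_neg]
  push_neg
  exact ⟨fun h => absurd h h1, h2⟩

lemma BI_mk (v : Finset α → ℝ) (A B T : Finset α) :
    BI v (s(A,B)) T = v (A ∪ B ∪ T) - v (A ∪ T) - v (B ∪ T) + v T := rfl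

lemma BI_case1 {N S : Finset α} {a : α} (hS : S ⊆ N) (haS : a ∉ S)
    {T : Finset α} (hT : T ⊆ N \ S) {Q : Finset α} (hQ : Q ⊆ S) (hQ0 : Q ≠ ∅)
    (hQS : Q ≠ S) :
    |BI (apexGame N a) (s(Q, S \ Q)) T| =
      if T = {a} ∨ T = N \ (S ∪ {a}) then 1 else 0 := by
  have hQne : Q.Nonempty := nonempty_iff_ne_empty.mpr hQ0
  have hSQne : (S \ Q).Nonempty := by
    rw [sdiff_nonempty]; exact fun h => hQS (subset_antisymm hQ h)
  obtain ⟨b, hb⟩ := hQne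
  obtain ⟨c, hc⟩ := hSQne
  have hbS : b ∈ S := hQ hb
  have hcS : c ∈ S := (mem_sdiff.mp hc).1
  have hTS : ∀ x ∈ S, x ∉ T := fun x hx hxT => (mem_sdiff.mp (hT hxT)).2 hx
  have hba : b ≠ a := fun h => haS (h ▸ hbS)
  have hca : c ≠ a := fun h => haS (h ▸ hcS)
  have hcub : Q ∪ (S \ Q) = S := union_sdiff_of_subset hQ
  rw [BI_mk, hcub]
  by_cases haT : a ∈ T
  · have h1 : apexGame N a (S ∪ T) = 1 :=
      apex_pos N a (mem_union_right _ haT) ⟨b, by simp [hbS, hba]⟩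
    have h2 : apexGame N a (Q ∪ T) = 1 :=
      apex_pos N a (mem_union_right _ haT) ⟨b, by simp [hb, hba]⟩
    have h3 : apexGame N a ((S \ Q) ∪ T) = 1 :=
      apex_pos N a (mem_union_right _ haT) ⟨c, by simp [(mem_sdiff.mp hc).1, (mem_sdiff.mp hc).2, hca]⟩
    have hTne : T ≠ N \ (S ∪ {a}) := fun h => by
      have : a ∈ N \ (S ∪ {a}) := h ▸ haT
      simp at this
    by_cases hTa : T = {a}
    · have h4 : apexGame N a T = 0 := hTa ▸ apex_singleton N a
      rw [h1, h2, h3, h4, if_pos (Or.inl hTa)]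
      norm_num
    · have h4 : apexGame N a T = 1 := by
        refine apex_pos N a haT ?_
        rw [sdiff_nonempty]
        exact fun h => hTa (subset_antisymm h (singleton_subset_iff.mpr haT))
      rw [h1, h2, h3, h4, if_neg (not_or.mpr ⟨hTa, hTne⟩)]
      norm_num
  · have haQT : a ∉ Q ∪ T := by
      simp only [mem_union]
      exact fun h => h.elim (fun h' => haS (hQ h')) haT
    have haSQT : a ∉ (S \ Q) ∪ T := by
      simp only [mem_union, mem_sdiff]
      exact fun h => h.elim (fun h' => haS h'.1) haT
    have h2 : apexGame N a (Q ∪ T) = 0 := by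
      refine apex_not_mem N a haQT fun h => ?_
      have hc' : c ∈ Q ∪ T := h ▸ (mem_sdiff.mpr ⟨hS hcS, by simp [hca]⟩)
      rcases mem_union.mp hc' with h' | h'
      · exact (mem_sdiff.mp hc).2 h'
      · exact hTS c hcS h'
    have h3 : apexGame N a ((S \ Q) ∪ T) = 0 := by
      refine apex_not_mem N a haSQT fun h => ?_
      have hb' : b ∈ (S \ Q) ∪ T := h ▸ (mem_sdiff.mpr ⟨hS hbS, by simp [hba]⟩)
      rcases mem_union.mp hb' with h' | h'
      · exact (mem_sdiff.mp h').2 hb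
      · exact hTS b hbS h'
    have h4 : apexGame N a T = 0 := by
      refine apex_not_mem N a haT fun h => ?_
      have hb' : b ∈ T := h ▸ (mem_sdiff.mpr ⟨hS hbS, by simp [hba]⟩)
      exact hTS b hbS hb'
    by_cases hTe : T = N \ (S ∪ {a})
    · have h1 : apexGame N a (S ∪ T) = 1 := by
        have : S ∪ T = N \ {a} := by
          subst hTe
          ext x
          simp only [mem_union, mem_sdiff, mem_singleton]
          constructor
          · rintro (h | ⟨h1', h2'⟩)
            · exact ⟨hS h, fun hx => haS (hx ▸ h)⟩
            · exact ⟨h1', fun hx => h2' (Or.inr (by simp [hx]))⟩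
          · rintro ⟨h1', h2'⟩
            by_cases hx : x ∈ S
            · exact Or.inl hx
            · exact Or.inr ⟨h1', by simp [hx, h2']⟩
        rw [this]; exact apex_full N a
      rw [h1, h2, h3, h4, if_pos (Or.inr hTe)]
      norm_num
    · have h1 : apexGame N a (S ∪ T) = 0 := by
        refine apex_not_mem N a (by simp [haS, haT]) fun h => ?_
        apply hTe
        ext x
        simp only [mem_sdiff, mem_union, mem_singleton]
        constructor
        · intro hx
          have hx' := hT hx
          rw [mem_sdiff] at hx'
          exact ⟨hx'.1, fun h' => h'.elim hx'.2 (fun h'' => haT (h'' ▸ hx))⟩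
        · rintro ⟨h1', h2'⟩
          push_neg at h2'
          have : x ∈ S ∪ T := by
            rw [h]; simp [h1', h2'.2]
          exact (mem_union.mp this).elim (fun h'' => absurd h'' h2'.1) id
      have hTa : T ≠ {a} := fun h => haT (h ▸ mem_singleton_self a)
      rw [h1, h2, h3, h4, if_neg (not_or.mpr ⟨hTa, hTe⟩)]
      norm_num

lemma BI_case2_aux {N S : Finset α} {a : α} (hS : S ⊆ N) (haS : a ∈ S)
    {T : Finset α} (hT : T ⊆ N \ S) {A : Finset α} (hA : A ⊆ S) (haA : a ∈ A)
    (hAa : (A \ {a}).Nonempty) :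
    BI (apexGame N a) (s(A, S \ A)) T = 0 := by
  obtain ⟨c, hc⟩ := hAa
  rw [mem_sdiff, mem_singleton] at hc
  have hcS : c ∈ S := hA hc.1
  have hTS : ∀ x ∈ S, x ∉ T := fun x hx hxT => (mem_sdiff.mp (hT hxT)).2 hx
  have haT : a ∉ T := hTS a haS
  have hcub : A ∪ (S \ A) = S := union_sdiff_of_subset hA
  rw [BI_mk, hcub]
  have h1 : apexGame N a (S ∪ T) = 1 :=
    apex_pos N a (mem_union_left _ haS) ⟨c, by simp [hcS, hc.2]⟩
  have h2 : apexGame N a (A ∪ T) = 1 :=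
    apex_pos N a (mem_union_left _ haA) ⟨c, by simp [hc.1, hc.2]⟩
  have h3 : apexGame N a ((S \ A) ∪ T) = 0 := by
    refine apex_not_mem N a (by simp [haA, haT, haS]) fun h => ?_
    have hc' : c ∈ (S \ A) ∪ T := h ▸ (mem_sdiff.mpr ⟨hS hcS, by simp [hc.2]⟩)
    rcases mem_union.mp hc' with h' | h'
    · exact (mem_sdiff.mp h').2 hc.1
    · exact hTS c hcS h'
  have h4 : apexGame N a T = 0 := by
    refine apex_not_mem N a haT fun h => ?_
    have hc' : c ∈ T := h ▸ (mem_sdiff.mpr ⟨hS hcS, by simp [hc.2]⟩)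
    exact hTS c hcS hc'
  rw [h1, h2, h3, h4]; ring

lemma BI_case2_main {N S : Finset α} {a : α} (hS : S ⊆ N) (haS : a ∈ S)
    (hSN : S ≠ N) (hs : 2 ≤ S.card) {T : Finset α} (hT : T ⊆ N \ S) :
    |BI (apexGame N a) (s({a}, S \ {a})) T| = if T = ∅ ∨ T = N \ S then 1 else 0 := by
  have hSa : (S \ {a}).Nonempty := by
    rw [sdiff_nonempty]
    intro h
    have := card_le_card h
    simp at this
    omega
  obtain ⟨c, hc⟩ := hSa
  rw [mem_sdiff, mem_singleton] at hc
  have hTS : ∀ x ∈ S, x ∉ T := fun x hx hxT => (mem_sdiff.mp (hT hxT)).2 hx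
  have haT : a ∉ T := hTS a haS
  have hcub : {a} ∪ (S \ {a}) = S := union_sdiff_of_subset (singleton_subset_iff.mpr haS)
  rw [BI_mk, hcub]
  have hNS : (N \ S).Nonempty := by
    rw [sdiff_nonempty]; exact fun h => hSN (subset_antisymm hS h)
  have h1 : apexGame N a (S ∪ T) = 1 :=
    apex_pos N a (mem_union_left _ haS) ⟨c, by simp [hc.1, hc.2]⟩
  have h4 : apexGame N a T = 0 := by
    refine apex_not_mem N a haT fun h => ?_
    have hc' : c ∈ T := h ▸ (mem_sdiff.mpr ⟨hS hc.1, by simp [hc.2]⟩)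
    exact hTS c hc.1 hc'
  by_cases hTe : T = ∅
  · have h2 : apexGame N a ({a} ∪ T) = 0 := by
      rw [hTe, union_empty]; exact apex_singleton N a
    have h3 : apexGame N a ((S \ {a}) ∪ T) = 0 := by
      rw [hTe, union_empty]
      refine apex_not_mem N a (by simp) fun h => ?_
      obtain ⟨d, hd⟩ := hNS
      rw [mem_sdiff] at hd
      have hd' : d ∈ S \ {a} := h ▸ (mem_sdiff.mpr ⟨hd.1, by
        simp only [mem_singleton]; exact fun h' => hd.2 (h' ▸ haS)⟩)
      exact hd.2 (mem_sdiff.mp hd').1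
    rw [h1, h2, h3, h4, if_pos (Or.inl hTe)]
    norm_num
  · have hTne : T.Nonempty := nonempty_iff_ne_empty.mpr hTe
    have h2 : apexGame N a ({a} ∪ T) = 1 := by
      refine apex_pos N a (by simp) ?_
      obtain ⟨d, hd⟩ := hTne
      have hda : d ≠ a := fun h => haT (h ▸ hd)
      exact ⟨d, by simp [hd, hda]⟩
    by_cases hTf : T = N \ S
    · have h3 : apexGame N a ((S \ {a}) ∪ T) = 1 := by
        have : (S \ {a}) ∪ T = N \ {a} := by
          subst hTf
          ext x
          simp only [mem_union, mem_sdiff, mem_singleton]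
          constructor
          · rintro (⟨h1', h2'⟩ | ⟨h1', h2'⟩)
            · exact ⟨hS h1', h2'⟩
            · exact ⟨h1', fun h => h2' (h ▸ haS)⟩
          · rintro ⟨h1', h2'⟩
            by_cases hx : x ∈ S
            · exact Or.inl ⟨hx, h2'⟩
            · exact Or.inr ⟨h1', hx⟩
        rw [this]; exact apex_full N a
      rw [h1, h2, h3, h4, if_pos (Or.inr hTf)]
      norm_num
    · have h3 : apexGame N a ((S \ {a}) ∪ T) = 0 := by
        refine apex_not_mem N a (by simp [haT]) fun h => ?_
        apply hTf
        ext x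
        simp only [mem_sdiff]
        constructor
        · intro hx; exact mem_sdiff.mp (hT hx)
        · rintro ⟨h1', h2'⟩
          have hxa : x ≠ a := fun h' => h2' (h' ▸ haS)
          have : x ∈ (S \ {a}) ∪ T := by rw [h]; simp [h1', hxa]
          rcases mem_union.mp this with h' | h'
          · exact absurd (mem_sdiff.mp h').1 h2'
          · exact h'
      rw [h1, h2, h3, h4, if_neg (by simp [hTe, hTf])]
      norm_num

lemma BI_case3 {N : Finset α} {a : α} (haN : a ∈ N) (hn : 3 ≤ N.card)
    {Q : Finset α} (hQ : Q ⊆ N) (hQ0 : Q ≠ ∅) (hQN : Q ≠ N) :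
    BI (apexGame N a) (s(Q, N \ Q)) ∅ = 0 := by
  have key : ∀ A : Finset α, A ⊆ N → a ∈ A → A ≠ N →
      apexGame N a A + apexGame N a (N \ A) = 1 := by
    intro A hA haA hAN
    by_cases hAa : A = {a}
    · have h1 : apexGame N a A = 0 := hAa ▸ apex_singleton N a
      have h2 : apexGame N a (N \ A) = 1 := by rw [hAa]; exact apex_full N a
      rw [h1, h2]; ring
    · have hAne : (A \ {a}).Nonempty := by
        rw [sdiff_nonempty]
        exact fun h => hAa (subset_antisymm h (singleton_subset_iff.mpr haA))
      obtain ⟨c, hc⟩ := hAne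
      rw [mem_sdiff, mem_singleton] at hc
      have h1 : apexGame N a A = 1 := apex_pos N a haA ⟨c, by simp [hc.1, hc.2]⟩
      have h2 : apexGame N a (N \ A) = 0 := by
        refine apex_not_mem N a (by simp [haA]) fun h => ?_
        have hc' : c ∈ N \ A := h ▸ (mem_sdiff.mpr ⟨hA hc.1, by simp [hc.2]⟩)
        exact (mem_sdiff.mp hc').2 hc.1
      rw [h1, h2]; ring
  have hNa : (N \ {a}).Nonempty := by
    rw [sdiff_nonempty]
    intro h
    have := card_le_card h
    simp at this
    omega
  have h1 : apexGame N a (Q ∪ (N \ Q) ∪ ∅) = 1 := by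
    rw [union_empty, union_sdiff_of_subset hQ]
    exact apex_pos N a haN hNa
  have h4 : apexGame N a ∅ = 0 := by
    refine apex_not_mem N a (notMem_empty a) fun h => ?_
    obtain ⟨d, hd⟩ := hNa
    exact notMem_empty d (h ▸ hd)
  have hsum : apexGame N a Q + apexGame N a (N \ Q) = 1 := by
    by_cases haQ : a ∈ Q
    · exact key Q hQ haQ hQN
    · have haQ' : a ∈ N \ Q := mem_sdiff.mpr ⟨haN, haQ⟩
      have hQN' : N \ Q ≠ N := by
        intro h
        obtain ⟨b, hb⟩ := nonempty_iff_ne_empty.mpr hQ0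
        have hb' : b ∈ N \ Q := by rw [h]; exact hQ hb
        exact absurd hb (mem_sdiff.mp hb').2
      have := key (N \ Q) (sdiff_subset) haQ' hQN'
      rw [sdiff_sdiff_right_self, inf_eq_inter, inter_eq_right.mpr hQ] at this
      linarith
  rw [BI_mk, h1, union_empty, union_empty, h4]
  linarith

lemma mem_Pi2 {S : Finset α} {π : Sym2 (Finset α)} :
    π ∈ Pi2 S ↔ ∃ Q, (Q ⊆ S ∧ Q ≠ ∅ ∧ Q ≠ S) ∧ s(Q, S \ Q) = π := by
  simp [Pi2, Finset.mem_image, Finset.mem_filter, Finset.mem_powerset]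

lemma sum_two {P : Finset α} (q : Finset α → ℝ) {U V : Finset α}
    (hU : U ⊆ P) (hV : V ⊆ P) (hUV : U ≠ V) :
    ∑ T ∈ P.powerset, q T * (if T = U ∨ T = V then (1:ℝ) else 0) = q U + q V := by
  have h1 : ∀ T, q T * (if T = U ∨ T = V then (1:ℝ) else 0)
      = if T = U ∨ T = V then q T else 0 := by
    intro T; split_ifs <;> ring
  rw [Finset.sum_congr rfl fun T _ => h1 T, ← Finset.sum_filter]
  have hfil : P.powerset.filter (fun T => T = U ∨ T = V) = {U, V} := by
    ext T
    simp only [Finset.mem_filter, Finset.mem_powerset, Finset.mem_insert,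
      Finset.mem_singleton]
    constructor
    · exact fun h => h.2
    · rintro (rfl | rfl)
      · exact ⟨hU, Or.inl rfl⟩
      · exact ⟨hV, Or.inr rfl⟩
  rw [hfil, Finset.sum_pair hUV]

/-- values of the decisiveness index in the apex game. -/
theorem statement16 (N : Finset α) (a : α) (ha : a ∈ N) (hn : 3 ≤ N.card)
    (S : Finset α) (hS : S ⊆ N) (hs : 2 ≤ S.card)
    (p : Sym2 (Finset α) → ℝ) (q : Finset α → ℝ)
    (hp0 : ∀ π ∈ Pi2 S, 0 ≤ p π) (hp1 : ∑ π ∈ Pi2 S, p π = 1)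
    (hq0 : ∀ T ∈ (N \ S).powerset, 0 ≤ q T) (hq1 : ∑ T ∈ (N \ S).powerset, q T = 1) :
    (a ∉ S → decis N (apexGame N a) p q S = q (N \ (S ∪ {a})) + q {a}) ∧
    (a ∈ S → S ≠ N →
      decis N (apexGame N a) p q S = (q ∅ + q (N \ S)) * p (s({a}, S \ {a}))) ∧
    (S = N → decis N (apexGame N a) p q S = 0) := by
  refine ⟨?_, ?_, ?_⟩
  · -- Case a ∉ S
    intro haS
    have key : ∀ T ∈ (N \ S).powerset,
        q T * ∑ π ∈ Pi2 S, p π * |BI (apexGame N a) π T|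
          = q T * (if T = {a} ∨ T = N \ (S ∪ {a}) then 1 else 0) := by
      intro T hT
      rw [mem_powerset] at hT
      congr 1
      calc ∑ π ∈ Pi2 S, p π * |BI (apexGame N a) π T|
          = ∑ π ∈ Pi2 S, p π * (if T = {a} ∨ T = N \ (S ∪ {a}) then 1 else 0) := by
            refine Finset.sum_congr rfl fun π hπ => ?_
            obtain ⟨Q, ⟨hQ1, hQ2, hQ3⟩, rfl⟩ := mem_Pi2.mp hπ
            rw [BI_case1 hS haS hT hQ1 hQ2 hQ3]
        _ = (∑ π ∈ Pi2 S, p π) * (if T = {a} ∨ T = N \ (S ∪ {a}) then 1 else 0) := by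
            rw [Finset.sum_mul]
        _ = _ := by rw [hp1, one_mul]
    rw [decis, Finset.sum_congr rfl key,
      sum_two q (singleton_subset_iff.mpr (mem_sdiff.mpr ⟨ha, haS⟩))
        (sdiff_subset_sdiff (Finset.Subset.refl N) subset_union_left)
        (fun h => by
          have : a ∈ N \ (S ∪ {a}) := h ▸ mem_singleton_self a
          simp at this)]
    ring
  · -- Case a ∈ S, S ≠ N
    intro haS hSN
    have haS' : {a} ≠ S := fun h => by rw [← h] at hs; simp at hs
    have hπ₀ : s({a}, S \ {a}) ∈ Pi2 S :=
      mem_Pi2.mpr ⟨{a}, ⟨singleton_subset_iff.mpr haS, singleton_ne_empty a, haS'⟩, rfl⟩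
    have key : ∀ T ∈ (N \ S).powerset,
        q T * ∑ π ∈ Pi2 S, p π * |BI (apexGame N a) π T|
          = (q T * (if T = ∅ ∨ T = N \ S then 1 else 0)) * p (s({a}, S \ {a})) := by
      intro T hT
      rw [mem_powerset] at hT
      rw [Finset.sum_eq_single_of_mem _ hπ₀ ?_]
      · rw [BI_case2_main hS haS hSN hs hT]; ring
      · intro π hπ hne
        obtain ⟨Q, ⟨hQ1, hQ2, hQ3⟩, rfl⟩ := mem_Pi2.mp hπ
        have hz : BI (apexGame N a) (s(Q, S \ Q)) T = 0 := by
          by_cases haQ : a ∈ Q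
          · have hQa : Q ≠ {a} := fun h => hne (by rw [h])
            refine BI_case2_aux hS haS hT hQ1 haQ ?_
            rw [sdiff_nonempty]
            exact fun h => hQa (subset_antisymm h (singleton_subset_iff.mpr haQ))
          · have hQQ : S \ (S \ Q) = Q := by
              rw [sdiff_sdiff_right_self, inf_eq_inter, inter_eq_right.mpr hQ1]
            have haSQ : a ∈ S \ Q := mem_sdiff.mpr ⟨haS, haQ⟩
            have hSQa : S \ Q ≠ {a} := by
              intro h
              apply hne
              have : Q = S \ {a} := by rw [← hQQ, h]
              rw [h, this]
              exact Sym2.eq_swap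
            have := BI_case2_aux hS haS hT (sdiff_subset) haSQ (by
              rw [sdiff_nonempty]
              exact fun h => hSQa (subset_antisymm h (singleton_subset_iff.mpr haSQ)))
            rw [hQQ, Sym2.eq_swap] at this
            exact this
        rw [hz, abs_zero, mul_zero]
    rw [decis, Finset.sum_congr rfl key, ← Finset.sum_mul,
      sum_two q (empty_subset _) (Finset.Subset.refl _)
        (fun h => by
          have hNS : (N \ S).Nonempty := by
            rw [sdiff_nonempty]; exact fun h' => hSN (subset_antisymm hS h')
          rw [← h] at hNS
          exact not_nonempty_empty hNS)]
  · -- Case S = N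
    intro hSN
    subst hSN
    rw [decis, Finset.sdiff_self, Finset.powerset_empty, Finset.sum_singleton]
    have : ∑ π ∈ Pi2 S, p π * |BI (apexGame S a) π ∅| = 0 := by
      refine Finset.sum_eq_zero fun π hπ => ?_
      obtain ⟨Q, ⟨hQ1, hQ2, hQ3⟩, rfl⟩ := mem_Pi2.mp hπ
      rw [BI_case3 ha hn hQ1 hQ2 hQ3, abs_zero, mul_zero]
    rw [this, mul_zero]
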